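/- Let ρ be a density operator, Λ a measurement operator with Tr[Λρ] > 0, σ a positive semi-definite operator, and set ρ̃ := √Λ ρ √Λ / Tr[Λρ]. Then F(ρ̃, σ) = F(ρ, √Λ σ √Λ) / Tr[Λρ], where F(A,B) = ‖√A √B‖₁². -/

import Mathlib

open Matrix Kronecker ComplexOrder

/-- The square root of a PSD matrix, as `Matrix.PosSemidef.sqrt` was defined in Mathlib (Dec 2024). -/
noncomputable def Matrix.PosSemidef.psdSqrtOld {n : Type*} [Fintype n] [DecidableEq n]
    {A : Matrix n n ℂ} (hA : A.PosSemidef) : Matrix n n ℂ :=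
  hA.1.eigenvectorUnitary.1 * diagonal ((↑) ∘ (√·) ∘ hA.1.eigenvalues) *
  (star hA.1.eigenvectorUnitary : Matrix n n ℂ)

/-- The trace norm ‖A‖₁ = Tr √(AᴴA). -/
noncomputable def traceNorm {n : Type*} [Fintype n] [DecidableEq n] (A : Matrix n n ℂ) : ℝ :=
  ((Matrix.posSemidef_conjTranspose_mul_self A).psdSqrtOld).trace.re

/-- The positive-semidefinite square root of a matrix (0 if not PSD). -/
noncomputable def msqrt {n : Type*} [Fintype n] [DecidableEq n] (A : Matrix n n ℂ) :
    Matrix n n ℂ :=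
  open scoped Classical in
  if h : A.PosSemidef then h.psdSqrtOld else 0

/-- Uhlmann fidelity F(A,B) = ‖√A √B‖₁² of positive semi-definite operators. -/
noncomputable def fid {n : Type*} [Fintype n] [DecidableEq n] (A B : Matrix n n ℂ) : ℝ :=
  (traceNorm (msqrt A * msqrt B)) ^ 2

namespace Matrix.PosSemidef
variable {n : Type*} [Fintype n] [DecidableEq n]

lemma psdSqrtOld_eq_cfc {A : Matrix n n ℂ} (hA : A.PosSemidef) :
    hA.psdSqrtOld = cfc Real.sqrt A := by
  rw [hA.1.cfc_eq]
  rfl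

open scoped MatrixOrder in
lemma posSemidef_psdSqrtOld {A : Matrix n n ℂ} (hA : A.PosSemidef) :
    hA.psdSqrtOld.PosSemidef := by
  rw [psdSqrtOld_eq_cfc, ← Matrix.nonneg_iff_posSemidef]
  exact cfc_nonneg (fun x _ => Real.sqrt_nonneg x)

open scoped MatrixOrder in
lemma psdSqrtOld_eq_sqrt {A : Matrix n n ℂ} (hA : A.PosSemidef) :
    hA.psdSqrtOld = CFC.sqrt A := by
  have h0 : (0 : Matrix n n ℂ) ≤ A := hA.nonneg
  rw [psdSqrtOld_eq_cfc, CFC.sqrt_eq_real_sqrt A h0, cfcₙ_eq_cfc]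

open scoped MatrixOrder in
lemma psdSqrtOld_mul_self {A : Matrix n n ℂ} (hA : A.PosSemidef) :
    hA.psdSqrtOld * hA.psdSqrtOld = A := by
  rw [psdSqrtOld_eq_sqrt]
  exact CFC.sqrt_mul_sqrt_self A hA.nonneg

open scoped MatrixOrder in
lemma eq_psdSqrtOld_of_sq_eq {A : Matrix n n ℂ} (hA : A.PosSemidef) {B : Matrix n n ℂ}
    (hB : B.PosSemidef) (hAB : A ^ 2 = B) : A = hB.psdSqrtOld := by
  rw [psdSqrtOld_eq_sqrt]
  exact (CFC.sqrt_unique (by rw [← pow_two]; exact hAB) hA.nonneg).symm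

end Matrix.PosSemidef

section aux

variable {n : Type*} [Fintype n] [DecidableEq n]

lemma msqrt_eq {A : Matrix n n ℂ} (h : A.PosSemidef) : msqrt A = h.psdSqrtOld := dif_pos h

lemma msqrt_posSemidef {A : Matrix n n ℂ} (h : A.PosSemidef) : (msqrt A).PosSemidef := by
  rw [msqrt_eq h]; exact h.posSemidef_psdSqrtOld

lemma msqrt_mul_self {A : Matrix n n ℂ} (h : A.PosSemidef) : msqrt A * msqrt A = A := by
  rw [msqrt_eq h]; exact h.psdSqrtOld_mul_self

lemma msqrt_mul_self_assoc {A : Matrix n n ℂ} (h : A.PosSemidef) (Z : Matrix n n ℂ) :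
    msqrt A * (msqrt A * Z) = A * Z := by
  rw [← Matrix.mul_assoc, msqrt_mul_self h]

lemma msqrt_conjTranspose {A : Matrix n n ℂ} (h : A.PosSemidef) : (msqrt A)ᴴ = msqrt A :=
  (msqrt_posSemidef h).isHermitian

lemma sqrt_trace_congr {A B : Matrix n n ℂ} (hA : A.PosSemidef) (hB : B.PosSemidef)
    (h : A = B) : hA.psdSqrtOld = hB.psdSqrtOld := by subst h; rfl

lemma traceNorm_congr {X Y : Matrix n n ℂ} (h : Xᴴ * X = Yᴴ * Y) :
    traceNorm X = traceNorm Y := by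
  unfold traceNorm
  rw [sqrt_trace_congr (Matrix.posSemidef_conjTranspose_mul_self X)
    (Matrix.posSemidef_conjTranspose_mul_self Y) h]

lemma eval_charpoly' (M : Matrix n n ℂ) (t : ℂ) :
    M.charpoly.eval t = (t • (1 : Matrix n n ℂ) - M).det := by
  have h0 : M.charpoly.eval t = (Polynomial.evalRingHom t) M.charmatrix.det := rfl
  rw [h0, RingHom.map_det]
  congr 1
  ext i j
  by_cases hij : i = j <;>
    simp [Matrix.charmatrix_apply, Matrix.diagonal_apply, Matrix.one_apply, Matrix.sub_apply,
      Matrix.smul_apply, hij]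

lemma charpoly_mul_comm' (A B : Matrix n n ℂ) : (A * B).charpoly = (B * A).charpoly := by
  apply Polynomial.eq_of_infinite_eval_eq
  apply Set.Infinite.mono (s := {x : ℂ | x ≠ 0})
  · intro x hx
    have hx' : (x : ℂ) ≠ 0 := hx
    have key : ∀ M : Matrix n n ℂ, x • (1 : Matrix n n ℂ) - M = x • (1 - x⁻¹ • M) := by
      intro M
      rw [smul_sub, smul_smul, mul_inv_cancel₀ hx', one_smul]
    simp only [Set.mem_setOf_eq, eval_charpoly', key]
    rw [Matrix.det_smul, Matrix.det_smul]
    congr 1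
    have h1 : x⁻¹ • (A * B) = (x⁻¹ • A) * B := by rw [Matrix.smul_mul]
    have h2 : x⁻¹ • (B * A) = B * (x⁻¹ • A) := by rw [Matrix.mul_smul]
    rw [h1, h2, Matrix.det_one_sub_mul_comm]
  · have h0 : ({0} : Set ℂ).Finite := Set.finite_singleton 0
    have : {x : ℂ | x ≠ 0} = ({0} : Set ℂ)ᶜ := by ext x; simp
    rw [this]
    exact h0.infinite_compl

lemma charpoly_unitary_conj' (U D : Matrix n n ℂ) (hU : U * star U = 1) :
    (U * D * star U).charpoly = D.charpoly := by
  apply Polynomial.eq_of_infinite_eval_eq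
  apply Set.Infinite.mono (s := (Set.univ : Set ℂ))
  · intro x _
    have key : x • (1 : Matrix n n ℂ) - U * D * star U
        = U * (x • (1 : Matrix n n ℂ) - D) * star U := by
      rw [Matrix.mul_sub, Matrix.sub_mul, Matrix.mul_smul, Matrix.mul_one, Matrix.smul_mul, hU]
    simp only [Set.mem_setOf_eq, eval_charpoly', key, Matrix.det_mul]
    have h1 : U.det * (star U).det = 1 := by rw [← Matrix.det_mul, hU, Matrix.det_one]
    calc U.det * (x • (1 : Matrix n n ℂ) - D).det * (star U).det
        = (x • (1 : Matrix n n ℂ) - D).det * (U.det * (star U).det) := by ring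
      _ = (x • (1 : Matrix n n ℂ) - D).det := by rw [h1, mul_one]
  · exact Set.infinite_univ

lemma charpoly_diagonal' (d : n → ℂ) :
    (Matrix.diagonal d).charpoly
      = ((Finset.univ.val.map d).map (fun a => Polynomial.X - Polynomial.C a)).prod := by
  apply Polynomial.eq_of_infinite_eval_eq
  apply Set.Infinite.mono (s := (Set.univ : Set ℂ))
  · intro x _
    simp only [Set.mem_setOf_eq, eval_charpoly']
    have h : x • (1 : Matrix n n ℂ) - Matrix.diagonal d = Matrix.diagonal (fun i => x - d i) := by
      ext i j
      by_cases hij : i = j <;>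
        simp [Matrix.sub_apply, Matrix.smul_apply, Matrix.one_apply, Matrix.diagonal_apply, hij]
    rw [h, Matrix.det_diagonal, Finset.prod_eq_multiset_prod, Polynomial.eval_multiset_prod,
      Multiset.map_map, Multiset.map_map]
    exact congrArg _ (Multiset.map_congr rfl (by intro i _; simp))
  · exact Set.infinite_univ

lemma charpoly_roots_hermitian {A : Matrix n n ℂ} (hA : A.IsHermitian) :
    A.charpoly.roots = Finset.univ.val.map (fun i => (hA.eigenvalues i : ℂ)) := by
  have hU : (hA.eigenvectorUnitary : Matrix n n ℂ) * star (hA.eigenvectorUnitary : Matrix n n ℂ)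
      = 1 := Matrix.mem_unitaryGroup_iff.mp (hA.eigenvectorUnitary).2
  have h1 : A.charpoly
      = (Matrix.diagonal ((↑) ∘ hA.eigenvalues : n → ℂ)).charpoly := by
    conv_lhs => rw [hA.spectral_theorem]
    exact charpoly_unitary_conj' _ _ hU
  rw [h1, charpoly_diagonal', Polynomial.roots_multiset_prod_X_sub_C]
  exact Multiset.map_congr rfl (by intro i _; rfl)

lemma trace_sqrt_re_eq {A : Matrix n n ℂ} (hA : A.PosSemidef) :
    hA.psdSqrtOld.trace.re = (A.charpoly.roots.map (fun z => Real.sqrt z.re)).sum := by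
  rw [charpoly_roots_hermitian hA.isHermitian, Multiset.map_map, ← Finset.sum_eq_multiset_sum]
  have htr : hA.psdSqrtOld.trace = ∑ i, ((Real.sqrt (hA.isHermitian.eigenvalues i) : ℝ) : ℂ) := by
    have hU : (star hA.1.eigenvectorUnitary : Matrix n n ℂ) * hA.1.eigenvectorUnitary.1 = 1 :=
      Matrix.mem_unitaryGroup_iff'.mp (hA.1.eigenvectorUnitary).2
    show (hA.1.eigenvectorUnitary.1 *
      Matrix.diagonal (Complex.ofReal ∘ Real.sqrt ∘ hA.1.eigenvalues) *
      (star hA.1.eigenvectorUnitary : Matrix n n ℂ)).trace = _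
    rw [Matrix.trace_mul_cycle, hU, Matrix.one_mul, Matrix.trace_diagonal]
    simp [Function.comp]
  rw [htr, Complex.re_sum]
  simp

lemma traceNorm_conjTranspose (X : Matrix n n ℂ) : traceNorm Xᴴ = traceNorm X := by
  unfold traceNorm
  rw [trace_sqrt_re_eq, trace_sqrt_re_eq]
  have h1 : (Xᴴᴴ * Xᴴ).charpoly = (Xᴴ * X).charpoly := by
    rw [Matrix.conjTranspose_conjTranspose]
    exact charpoly_mul_comm' X Xᴴ
  rw [h1]

lemma posSemidef_real_smul {A : Matrix n n ℂ} (hA : A.PosSemidef) {r : ℝ} (hr : 0 ≤ r) :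
    (r • A).PosSemidef := by
  have h : r • A = (Real.sqrt r • hA.psdSqrtOld)ᴴ * (Real.sqrt r • hA.psdSqrtOld) := by
    rw [Matrix.conjTranspose_smul, star_trivial, hA.posSemidef_psdSqrtOld.isHermitian.eq,
      Matrix.smul_mul, Matrix.mul_smul, smul_smul, hA.psdSqrtOld_mul_self, Real.mul_self_sqrt hr]
  rw [h]
  exact Matrix.posSemidef_conjTranspose_mul_self _

lemma msqrt_smul {A : Matrix n n ℂ} (hA : A.PosSemidef) {r : ℝ} (hr : 0 ≤ r) :
    msqrt (r • A) = Real.sqrt r • msqrt A := by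
  have hrA : (r • A).PosSemidef := posSemidef_real_smul hA hr
  have h1 : (Real.sqrt r • msqrt A).PosSemidef :=
    posSemidef_real_smul (msqrt_posSemidef hA) (Real.sqrt_nonneg r)
  have h2 : (Real.sqrt r • msqrt A) ^ 2 = r • A := by
    rw [pow_two, smul_mul_smul_comm, msqrt_mul_self hA, Real.mul_self_sqrt hr]
  rw [msqrt_eq hrA, ← h1.eq_psdSqrtOld_of_sq_eq hrA h2]

lemma traceNorm_smul (X : Matrix n n ℂ) {r : ℝ} (hr : 0 ≤ r) :
    traceNorm (r • X) = r * traceNorm X := by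
  unfold traceNorm
  have hP := Matrix.posSemidef_conjTranspose_mul_self X
  have hQ := Matrix.posSemidef_conjTranspose_mul_self (r • X)
  have h1 : (r • hP.psdSqrtOld).PosSemidef := posSemidef_real_smul hP.posSemidef_psdSqrtOld hr
  have h2 : (r • hP.psdSqrtOld) ^ 2 = (r • X)ᴴ * (r • X) := by
    rw [pow_two, smul_mul_smul_comm, hP.psdSqrtOld_mul_self, Matrix.conjTranspose_smul,
      Matrix.smul_mul, Matrix.mul_smul, smul_smul]
    norm_num
  rw [← h1.eq_psdSqrtOld_of_sq_eq hQ h2, Matrix.trace_smul]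
  simp [Complex.real_smul]

end aux

theorem stmt2 {n : Type*} [Fintype n] [DecidableEq n] (ρ Λ σ : Matrix n n ℂ)
    (hρ : ρ.PosSemidef) (hρtr : ρ.trace = 1)
    (hΛ : Λ.PosSemidef) (hΛI : (1 - Λ).PosSemidef) (hσ : σ.PosSemidef)
    (hpos : 0 < (Λ * ρ).trace.re) :
    fid ((((Λ * ρ).trace.re)⁻¹ : ℝ) • (msqrt Λ * ρ * msqrt Λ)) σ =
      fid ρ (msqrt Λ * σ * msqrt Λ) / (Λ * ρ).trace.re := by
  set c := (Λ * ρ).trace.re with hc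
  have hc0 : (0:ℝ) ≤ c⁻¹ := inv_nonneg.mpr hpos.le
  have hM : (msqrt Λ * ρ * msqrt Λ).PosSemidef := by
    have h := hρ.mul_mul_conjTranspose_same (msqrt Λ)
    rwa [msqrt_conjTranspose hΛ] at h
  have hK : (msqrt Λ * σ * msqrt Λ).PosSemidef := by
    have h := hσ.mul_mul_conjTranspose_same (msqrt Λ)
    rwa [msqrt_conjTranspose hΛ] at h
  set X := msqrt σ * msqrt Λ * msqrt ρ with hX
  have hXc : Xᴴ = msqrt ρ * msqrt Λ * msqrt σ := by
    rw [hX, Matrix.conjTranspose_mul, Matrix.conjTranspose_mul, msqrt_conjTranspose hρ,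
      msqrt_conjTranspose hΛ, msqrt_conjTranspose hσ, Matrix.mul_assoc]
  have step2 : fid ((c⁻¹ : ℝ) • (msqrt Λ * ρ * msqrt Λ)) σ
      = c⁻¹ * fid (msqrt Λ * ρ * msqrt Λ) σ := by
    unfold fid
    rw [msqrt_smul hM hc0, smul_mul_assoc, traceNorm_smul _ (Real.sqrt_nonneg _), mul_pow,
      Real.sq_sqrt hc0]
  have e1 : traceNorm (msqrt (msqrt Λ * ρ * msqrt Λ) * msqrt σ) = traceNorm Xᴴ := by
    apply traceNorm_congr
    rw [Matrix.conjTranspose_mul, msqrt_conjTranspose hσ, msqrt_conjTranspose hM,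
      Matrix.conjTranspose_conjTranspose, hXc, hX]
    rw [Matrix.mul_assoc (msqrt σ) (msqrt (msqrt Λ * ρ * msqrt Λ)), msqrt_mul_self_assoc hM]
    conv_lhs => rw [← msqrt_mul_self hρ]
    simp only [Matrix.mul_assoc]
  have e2 : traceNorm (msqrt ρ * msqrt (msqrt Λ * σ * msqrt Λ)) = traceNorm X := by
    have h' : (msqrt (msqrt Λ * σ * msqrt Λ) * msqrt ρ)ᴴ
        = msqrt ρ * msqrt (msqrt Λ * σ * msqrt Λ) := by
      rw [Matrix.conjTranspose_mul, msqrt_conjTranspose hρ, msqrt_conjTranspose hK]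
    rw [← h', traceNorm_conjTranspose]
    apply traceNorm_congr
    rw [Matrix.conjTranspose_mul, msqrt_conjTranspose hρ, msqrt_conjTranspose hK, hXc, hX]
    rw [Matrix.mul_assoc (msqrt ρ) (msqrt (msqrt Λ * σ * msqrt Λ)), msqrt_mul_self_assoc hK]
    conv_lhs => rw [← msqrt_mul_self hσ]
    simp only [Matrix.mul_assoc]
  have step3 : fid (msqrt Λ * ρ * msqrt Λ) σ = fid ρ (msqrt Λ * σ * msqrt Λ) := by
    unfold fid
    rw [e1, traceNorm_conjTranspose, e2]
  rw [step2, step3, mul_comm, ← div_eq_mul_inv]
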